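/- arXiv:1608.08428 — 4 statements merged into one kernel-verified Lean document; each statement's English description precedes it below -/
import Mathlib

section
/- For z > 0 real and q = a + v a real quaternion with nonzero vector part, define z^q := z^a (cos(|v| log z) + (v/|v|) sin(|v| log z)). Then the derivative of z ↦ z^q with respect to z equals q z^{q-1}. -/
open scoped Quaternion

/-- The quaternionic power `z^q` for `z > 0` real and `q` a real quaternion:
`z^q = z^{Sc q} (cos(|Ve q| log z) + (Ve q/|Ve q|) sin(|Ve q| log z))`. -/
noncomputable def qpow (z : ℝ) (q : ℍ[ℝ]) : ℍ[ℝ] :=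
  (z ^ q.re : ℝ) •
    (((Real.cos (‖q.im‖ * Real.log z) : ℝ) : ℍ[ℝ]) +
      (Real.sin (‖q.im‖ * Real.log z) / ‖q.im‖) • q.im)

set_option maxHeartbeats 1000000 in
/-- The derivative of `z ↦ z^q` with respect to `z > 0` is `q z^{q-1}`. -/
theorem qpow_hasDerivAt (q : ℍ[ℝ]) (hv : q.im ≠ 0) (z : ℝ) (hz : 0 < z) :
    HasDerivAt (fun z => qpow z q) (q * qpow z (q - 1)) z := by
  set a := q.re with ha
  set r := ‖q.im‖ with hrdef
  have hr : 0 < r := norm_pos_iff.mpr hv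
  have h1 : HasDerivAt (fun z : ℝ => r * Real.log z) (r * z⁻¹) z :=
    (Real.hasDerivAt_log hz.ne').const_mul r
  have hcos := h1.cos
  have hsin := h1.sin
  have hpow : HasDerivAt (fun z : ℝ => z ^ a) (a * z ^ (a - 1)) z :=
    Real.hasDerivAt_rpow_const (Or.inl hz.ne')
  have hF := hpow.mul hcos
  have hG := hpow.mul (hsin.div_const r)
  have hD := (hF.smul_const (1 : ℍ[ℝ])).add (hG.smul_const q.im)
  have hfun : (fun z : ℝ => qpow z q) =
      fun z : ℝ => (z ^ a * Real.cos (r * Real.log z)) • (1 : ℍ[ℝ]) +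
        (z ^ a * (Real.sin (r * Real.log z) / r)) • q.im := by
    funext w
    ext <;> simp [qpow, ← hrdef, ← ha] <;> ring
  rw [hfun]
  refine hD.congr_deriv ?_
  have hza : z ^ a = z ^ (a - 1) * z := by
    rw [Real.rpow_sub hz, Real.rpow_one]
    field_simp
  have hr2 : q.imI ^ 2 + q.imJ ^ 2 + q.imK ^ 2 = r ^ 2 := by
    have h3 : Quaternion.normSq q.im = r * r := by
      rw [hrdef, Quaternion.normSq_eq_norm_mul_self]
    rw [Quaternion.normSq_def'] at h3
    simp only [Quaternion.re_im, Quaternion.imI_im, Quaternion.imJ_im, Quaternion.imK_im] at h3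
    nlinarith [h3]
  have him : (q - 1).im = q.im := by simp
  have hre : (q - 1).re = a - 1 := by simp [ha]
  rw [qpow, him, hre, ← hrdef]
  ext
  · simp only [Quaternion.re_mul, Quaternion.re_add, Quaternion.re_smul, Quaternion.re_coe,
      Quaternion.re_one, Quaternion.re_im, Quaternion.imI_mul, Quaternion.imI_add,
      Quaternion.imI_smul, Quaternion.imI_coe, Quaternion.imI_one, Quaternion.imI_im,
      Quaternion.imJ_mul, Quaternion.imJ_add, Quaternion.imJ_smul, Quaternion.imJ_coe,
      Quaternion.imJ_one, Quaternion.imJ_im, Quaternion.imK_mul, Quaternion.imK_add,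
      Quaternion.imK_smul, Quaternion.imK_coe, Quaternion.imK_one, Quaternion.imK_im,
      smul_eq_mul]
    rw [hza]; field_simp; rw [← ha]
    linear_combination (Real.sin (r * Real.log z)) * hr2
  · simp only [Quaternion.re_mul, Quaternion.re_add, Quaternion.re_smul, Quaternion.re_coe,
      Quaternion.re_one, Quaternion.re_im, Quaternion.imI_mul, Quaternion.imI_add,
      Quaternion.imI_smul, Quaternion.imI_coe, Quaternion.imI_one, Quaternion.imI_im,
      Quaternion.imJ_mul, Quaternion.imJ_add, Quaternion.imJ_smul, Quaternion.imJ_coe,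
      Quaternion.imJ_one, Quaternion.imJ_im, Quaternion.imK_mul, Quaternion.imK_add,
      Quaternion.imK_smul, Quaternion.imK_coe, Quaternion.imK_one, Quaternion.imK_im,
      smul_eq_mul]
    rw [hza]; field_simp; rw [← ha]; ring
  · simp only [Quaternion.re_mul, Quaternion.re_add, Quaternion.re_smul, Quaternion.re_coe,
      Quaternion.re_one, Quaternion.re_im, Quaternion.imI_mul, Quaternion.imI_add,
      Quaternion.imI_smul, Quaternion.imI_coe, Quaternion.imI_one, Quaternion.imI_im,
      Quaternion.imJ_mul, Quaternion.imJ_add, Quaternion.imJ_smul, Quaternion.imJ_coe,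
      Quaternion.imJ_one, Quaternion.imJ_im, Quaternion.imK_mul, Quaternion.imK_add,
      Quaternion.imK_smul, Quaternion.imK_coe, Quaternion.imK_one, Quaternion.imK_im,
      smul_eq_mul]
    rw [hza]; field_simp; rw [← ha]; ring
  · simp only [Quaternion.re_mul, Quaternion.re_add, Quaternion.re_smul, Quaternion.re_coe,
      Quaternion.re_one, Quaternion.re_im, Quaternion.imI_mul, Quaternion.imI_add,
      Quaternion.imI_smul, Quaternion.imI_coe, Quaternion.imI_one, Quaternion.imI_im,
      Quaternion.imJ_mul, Quaternion.imJ_add, Quaternion.imJ_smul, Quaternion.imJ_coe,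
      Quaternion.imJ_one, Quaternion.imJ_im, Quaternion.imK_mul, Quaternion.imK_add,
      Quaternion.imK_smul, Quaternion.imK_coe, Quaternion.imK_one, Quaternion.imK_im,
      smul_eq_mul]
    rw [hza]; field_simp; rw [← ha]; ring
end

section
/- If q₁ = a₁ + v₁ and q₂ = a₂ + v₂ are real quaternions with v₁, v₂ nonzero and not parallel (v₁ ∧ v₂ ≠ 0), then there exists z > 0 (in any neighborhood of 1) such that z^{q₁} z^{q₂} ≠ z^{q₁+q₂}. -/
open scoped Quaternion

/-- If the vector parts of `q₁` and `q₂` are nonzero and not parallel (nonvanishing cross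
product, i.e. the vector part of `q₁.im * q₂.im` is nonzero), then in any neighborhood of `1`
there is a `z > 0` with `z^{q₁} z^{q₂} ≠ z^{q₁+q₂}`. -/
theorem qpow_semigroup_fails (q₁ q₂ : ℍ[ℝ]) (hv₁ : q₁.im ≠ 0) (hv₂ : q₂.im ≠ 0)
    (hcross : (q₁.im * q₂.im).im ≠ 0) :
    ∀ ε : ℝ, 0 < ε → ∃ z : ℝ, 0 < z ∧ |z - 1| < ε ∧
      qpow z q₁ * qpow z q₂ ≠ qpow z (q₁ + q₂) := by
  intro ε hε
  set a := ‖q₁.im‖ with ha_def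
  set b := ‖q₂.im‖ with hb_def
  have ha : 0 < a := norm_pos_iff.mpr hv₁
  have hb : 0 < b := norm_pos_iff.mpr hv₂
  have hlog : 0 < Real.log (1 + ε) / 2 := by
    have h := Real.log_pos (by linarith : (1:ℝ) < 1 + ε)
    linarith
  set t : ℝ := min (Real.log (1 + ε) / 2) (min a⁻¹ b⁻¹) with ht_def
  have ht : 0 < t := lt_min hlog (lt_min (inv_pos.mpr ha) (inv_pos.mpr hb))
  set z := Real.exp t with hz_def
  have hz : 0 < z := Real.exp_pos t
  refine ⟨z, hz, ?_, ?_⟩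
  · have hz1 : 1 < z := by
      calc (1:ℝ) = Real.exp 0 := Real.exp_zero.symm
        _ < Real.exp t := Real.exp_lt_exp.mpr ht
    rw [abs_of_pos (by linarith)]
    have h1 : t < Real.log (1 + ε) := lt_of_le_of_lt (min_le_left _ _) (by linarith)
    have : z < 1 + ε := by
      rw [hz_def]
      calc Real.exp t < Real.exp (Real.log (1 + ε)) := Real.exp_lt_exp.mpr h1
        _ = 1 + ε := Real.exp_log (by linarith)
    linarith
  · intro heq
    have hlz : Real.log z = t := Real.log_exp t
    have hsA : 0 < Real.sin (a * t) := by
      apply Real.sin_pos_of_pos_of_lt_pi (by positivity)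
      have : t ≤ a⁻¹ := le_trans (min_le_right _ _) (min_le_left _ _)
      have : a * t ≤ 1 := by
        calc a * t ≤ a * a⁻¹ := by nlinarith
          _ = 1 := mul_inv_cancel₀ ha.ne'
      linarith [Real.pi_gt_three]
    have hsB : 0 < Real.sin (b * t) := by
      apply Real.sin_pos_of_pos_of_lt_pi (by positivity)
      have : t ≤ b⁻¹ := le_trans (min_le_right _ _) (min_le_right _ _)
      have : b * t ≤ 1 := by
        calc b * t ≤ b * b⁻¹ := by nlinarith
          _ = 1 := mul_inv_cancel₀ hb.ne'
      linarith [Real.pi_gt_three]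
    -- component abbreviations
    have hp : q₁.im.re = 0 := Quaternion.re_im q₁
    have hq : q₂.im.re = 0 := Quaternion.re_im q₂
    set p1 := q₁.imI; set p2 := q₁.imJ; set p3 := q₁.imK
    set r1 := q₂.imI; set r2 := q₂.imJ; set r3 := q₂.imK
    set w1 := p2 * r3 - p3 * r2
    set w2 := p3 * r1 - p1 * r3
    set w3 := p1 * r2 - p2 * r1
    -- cross product components of q₁.im * q₂.im
    have hwI : (q₁.im * q₂.im).imI = w1 := by
      simp [Quaternion.imI_mul, hp, hq]; rfl
    have hwJ : (q₁.im * q₂.im).imJ = w2 := by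
      simp [Quaternion.imJ_mul, hp, hq]; ring
    have hwK : (q₁.im * q₂.im).imK = w3 := by
      simp [Quaternion.imK_mul, hp, hq]; rfl
    -- the three component equations
    have hradd : z ^ (q₁ + q₂).re = z ^ q₁.re * z ^ q₂.re := by
      rw [Quaternion.re_add, Real.rpow_add hz]
    have hnadd : ‖(q₁ + q₂).im‖ = ‖q₁.im + q₂.im‖ := by rw [Quaternion.im_add]
    have h1 := congrArg QuaternionAlgebra.imI heq
    have h2 := congrArg QuaternionAlgebra.imJ heq
    have h3 := congrArg QuaternionAlgebra.imK heq
    simp only [qpow, hradd, hnadd, hlz, Quaternion.imI_mul, Quaternion.imJ_mul,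
      Quaternion.imK_mul, Quaternion.re_mul, Quaternion.imI_smul, Quaternion.imJ_smul,
      Quaternion.imK_smul, Quaternion.re_smul, Quaternion.imI_add, Quaternion.imJ_add,
      Quaternion.imK_add, Quaternion.re_add, Quaternion.imI_coe, Quaternion.imJ_coe,
      Quaternion.imK_coe, Quaternion.re_coe, Quaternion.imI_im, Quaternion.imJ_im,
      Quaternion.imK_im, hp, hq, smul_eq_mul, mul_zero, zero_mul, add_zero, zero_add,
      mul_one, sub_zero] at h1 h2 h3
    have hw : w1 ≠ 0 ∨ w2 ≠ 0 ∨ w3 ≠ 0 := by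
      by_contra hc
      push_neg at hc
      obtain ⟨e1, e2, e3⟩ := hc
      apply hcross
      apply Quaternion.ext <;>
        simp [Quaternion.re_im, Quaternion.imI_im, Quaternion.imJ_im, Quaternion.imK_im,
          hwI, hwJ, hwK, e1, e2, e3]
    have hwpos : 0 < w1 ^ 2 + w2 ^ 2 + w3 ^ 2 := by
      rcases hw with h | h | h <;> positivity
    have key : z ^ q₁.re * z ^ q₂.re * (Real.sin (a * t) / a) * (Real.sin (b * t) / b) *
        (w1 ^ 2 + w2 ^ 2 + w3 ^ 2) = 0 := by
      linear_combination w1 * h1 + w2 * h2 + w3 * h3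
    have hr1 : 0 < z ^ q₁.re := Real.rpow_pos_of_pos hz _
    have hr2 : 0 < z ^ q₂.re := Real.rpow_pos_of_pos hz _
    have : 0 < z ^ q₁.re * z ^ q₂.re * (Real.sin (a * t) / a) * (Real.sin (b * t) / b) *
        (w1 ^ 2 + w2 ^ 2 + w3 ^ 2) := by positivity
    linarith
end

section
/- (Quaternionic binomial theorem) Let q = a + v be a real quaternion with a > 0 and v ≠ 0, and let z ∈ ℂ with |z| < 1, identified with an element of the commutative subalgebra of ℍ_ℂ generated by 1 and i. Then (1+z)^q = ∑_{j=0}^∞ C(q,j) z^j, where C(q,j) := q(q-1)⋯(q-j+1)/j! is the quaternionic binomial coefficient and (1+z)^q := (1+z)^a (cos(|v| log(1+z)) + (v/|v|) sin(|v| log(1+z))) using the principal branch of the logarithm. -/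
open Filter

noncomputable def cC (l : ℂ) (j : ℕ) : ℂ :=
  (j.factorial : ℂ)⁻¹ * ((List.range j).map (fun k => l - (k : ℂ))).prod

lemma cC_zero (l : ℂ) : cC l 0 = 1 := by simp [cC]

lemma cC_succ (l : ℂ) (j : ℕ) :
    cC l (j + 1) = ((j : ℂ) + 1)⁻¹ * (cC l j * (l - j)) := by
  simp only [cC, bind_pure_comp, List.map_eq_map, List.map_map, List.range_succ,
    List.map_append, List.prod_append, List.map_cons,
    List.map_nil, List.prod_cons, List.prod_nil, Nat.factorial_succ, Nat.cast_mul,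
    Nat.cast_add, Nat.cast_one, mul_one, Function.comp]
  rw [mul_inv]
  ring

lemma norm_cC_succ_le (l : ℂ) (j : ℕ) :
    ‖cC l (j + 1)‖ ≤ (‖l‖ + j) / ((j:ℝ) + 1) * ‖cC l j‖ := by
  rw [cC_succ, norm_mul, norm_mul, norm_inv]
  have h1 : ‖((j : ℂ) + 1)‖ = (j : ℝ) + 1 := by
    rw [show ((j : ℂ) + 1) = ((j + 1 : ℕ) : ℂ) by push_cast; ring]
    rw [Complex.norm_natCast]; push_cast; ring
  have h2 : ‖l - (j : ℂ)‖ ≤ ‖l‖ + j := by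
    simpa [Complex.norm_natCast] using (norm_sub_le l (j : ℂ))
  rw [h1, div_eq_mul_inv]
  have hj : (0:ℝ) < (j:ℝ) + 1 := by positivity
  calc ((j : ℝ) + 1)⁻¹ * (‖cC l j‖ * ‖l - (j:ℂ)‖)
      ≤ ((j : ℝ) + 1)⁻¹ * (‖cC l j‖ * (‖l‖ + j)) := by
        apply mul_le_mul_of_nonneg_left (mul_le_mul_of_nonneg_left h2 (norm_nonneg _))
        positivity
    _ = (‖l‖ + ↑j) * ((j:ℝ)+1)⁻¹ * ‖cC l j‖ := by ring

/-- master summability -/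
lemma summable_aux (l : ℂ) (x : ℝ) (hx : 0 ≤ x) (h1 : x < 1) :
    Summable (fun j : ℕ => ((j : ℝ) + 1) * ‖cC l j‖ * x ^ j) := by
  set r : ℝ := (1 + x) / 2 with hr
  have hr1 : r < 1 := by rw [hr]; linarith
  apply summable_of_ratio_norm_eventually_le hr1
  have hA : Tendsto (fun j : ℕ => 1/((j:ℝ)+1)) atTop (nhds 0) :=
    tendsto_one_div_add_atTop_nhds_zero_nat
  have htend : Tendsto
      (fun j : ℕ => ((j : ℝ) + 2) / ((j : ℝ) + 1) * ((‖l‖ + j) / ((j:ℝ) + 1)) * x)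
      atTop (nhds x) := by
    have h2 : Tendsto
        (fun j : ℕ => (1 + 1/((j:ℝ)+1)) * (1 + (‖l‖ - 1) * (1/((j:ℝ)+1))) * x)
        atTop (nhds ((1 + 0) * (1 + (‖l‖ - 1) * 0) * x)) :=
      (((tendsto_const_nhds.add hA)).mul
        (tendsto_const_nhds.add (tendsto_const_nhds.mul hA))).mul_const x
    simp only [add_zero, mul_zero, one_mul, mul_one] at h2
    refine h2.congr (fun j => ?_)
    have hj : ((j:ℝ)+1) ≠ 0 := by positivity
    field_simp
    ring_nf
  have hxr : x < r := by rw [hr]; linarith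
  filter_upwards [htend.eventually_lt_const hxr] with j hjr
  have hnn : (0:ℝ) ≤ ((j : ℝ) + 1) * ‖cC l j‖ * x ^ j := by positivity
  rw [Real.norm_of_nonneg (by positivity), Real.norm_of_nonneg hnn]
  have key : ((j:ℝ) + 1 + 1) * ‖cC l (j+1)‖ * x ^ (j+1)
      ≤ (((j : ℝ) + 2) / ((j : ℝ) + 1) * ((‖l‖ + j) / ((j:ℝ) + 1)) * x) *
        (((j : ℝ) + 1) * ‖cC l j‖ * x ^ j) := by
    have h3 := norm_cC_succ_le l j
    have hj : (0:ℝ) < (j:ℝ) + 1 := by positivity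
    calc ((j:ℝ) + 1 + 1) * ‖cC l (j+1)‖ * x ^ (j+1)
        ≤ ((j:ℝ) + 1 + 1) * ((‖l‖ + j) / ((j:ℝ) + 1) * ‖cC l j‖) * x ^ (j+1) := by
          apply mul_le_mul_of_nonneg_right _ (by positivity)
          apply mul_le_mul_of_nonneg_left h3 (by positivity)
      _ = (((j : ℝ) + 2) / ((j : ℝ) + 1) * ((‖l‖ + j) / ((j:ℝ) + 1)) * x) *
          (((j : ℝ) + 1) * ‖cC l j‖ * x ^ j) := by
          field_simp
          ring
  push_cast
  calc ((j:ℝ) + 1 + 1) * ‖cC l (j+1)‖ * x ^ (j+1)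
      ≤ (((j : ℝ) + 2) / ((j : ℝ) + 1) * ((‖l‖ + j) / ((j:ℝ) + 1)) * x) *
        (((j : ℝ) + 1) * ‖cC l j‖ * x ^ j) := key
    _ ≤ r * (((j : ℝ) + 1) * ‖cC l j‖ * x ^ j) :=
        mul_le_mul_of_nonneg_right (le_of_lt hjr) hnn

lemma summable_pow (l : ℂ) (z : ℂ) (hz : ‖z‖ < 1) :
    Summable (fun j : ℕ => cC l j * z ^ j) := by
  apply Summable.of_norm
  apply Summable.of_nonneg_of_le (fun j => norm_nonneg _) _ (summable_aux l ‖z‖ (norm_nonneg z) hz)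
  intro j
  rw [norm_mul, norm_pow]
  have h1 : (1:ℝ) ≤ (j:ℝ) + 1 := by have := Nat.cast_nonneg (α := ℝ) j; linarith
  calc ‖cC l j‖ * ‖z‖ ^ j = 1 * (‖cC l j‖ * ‖z‖ ^ j) := by ring
    _ ≤ ((j:ℝ)+1) * (‖cC l j‖ * ‖z‖ ^ j) := by
        apply mul_le_mul_of_nonneg_right h1 (by positivity)
    _ = ((j:ℝ)+1) * ‖cC l j‖ * ‖z‖ ^ j := by ring

lemma summable_deriv_bound (l : ℂ) (r : ℝ) (hr0 : 0 < r) (hr1 : r < 1) :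
    Summable (fun j : ℕ => (j : ℝ) * ‖cC l j‖ * r ^ (j - 1)) := by
  apply Summable.of_nonneg_of_le (fun j => by positivity)
    (f := fun (j : ℕ) => r⁻¹ * (((j:ℝ)+1) * ‖cC l j‖ * r ^ j))
  · intro j
    cases j with
    | zero =>
      simp only [Nat.cast_zero, zero_mul]
      positivity
    | succ n =>
      have h1 : ((n+1 : ℕ) : ℝ) * ‖cC l (n+1)‖ * r ^ ((n+1) - 1)
          = ((n:ℝ)+1) * ‖cC l (n+1)‖ * r ^ n := by push_cast; ring
      rw [h1]
      have h2 : r⁻¹ * ((((n+1:ℕ):ℝ)+1) * ‖cC l (n+1)‖ * r ^ (n+1))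
          = (((n:ℝ)+2) * ‖cC l (n+1)‖) * r ^ n := by
        push_cast
        field_simp
        ring
      rw [h2]
      apply mul_le_mul_of_nonneg_right _ (by positivity)
      apply mul_le_mul_of_nonneg_right _ (norm_nonneg _)
      linarith
  · exact (summable_aux l r hr0.le hr1).mul_left _

lemma summable_deriv_pt (l : ℂ) (z : ℂ) (hz : ‖z‖ < 1) :
    Summable (fun j : ℕ => (j : ℂ) * cC l j * z ^ (j - 1)) := by
  set r : ℝ := (1 + ‖z‖) / 2 with hr
  have hzr : ‖z‖ ≤ r := by rw [hr]; linarith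
  have hr0 : 0 < r := by positivity
  have hr1 : r < 1 := by rw [hr]; linarith
  apply Summable.of_norm
  apply Summable.of_nonneg_of_le (fun j => norm_nonneg _) _ (summable_deriv_bound l r hr0 hr1)
  intro j
  rw [norm_mul, norm_mul, norm_pow, Complex.norm_natCast]
  apply mul_le_mul_of_nonneg_left _ (by positivity)
  exact pow_le_pow_left₀ (norm_nonneg z) hzr _

/-- like summable_deriv_pt but exponent j -/
lemma summable_deriv_pt' (l : ℂ) (z : ℂ) (hz : ‖z‖ < 1) :
    Summable (fun j : ℕ => (j : ℂ) * cC l j * z ^ j) := by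
  apply Summable.of_norm
  apply Summable.of_nonneg_of_le (fun j => norm_nonneg _) _
    (summable_aux l ‖z‖ (norm_nonneg z) hz)
  intro j
  rw [norm_mul, norm_mul, norm_pow, Complex.norm_natCast]
  apply mul_le_mul_of_nonneg_right _ (by positivity)
  apply mul_le_mul_of_nonneg_right _ (norm_nonneg _)
  linarith

noncomputable def Fb (l : ℂ) (z : ℂ) : ℂ := ∑' j : ℕ, cC l j * z ^ j

lemma hasDerivAt_Fb (l : ℂ) (y : ℂ) (hy : ‖y‖ < 1) :
    HasDerivAt (Fb l) (∑' j : ℕ, (j : ℂ) * cC l j * y ^ (j - 1)) y := by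
  set r : ℝ := (1 + ‖y‖) / 2 with hr
  have hyr : ‖y‖ < r := by rw [hr]; linarith
  have hr0 : 0 < r := by positivity
  have hr1 : r < 1 := by rw [hr]; linarith
  apply hasDerivAt_tsum_of_isPreconnected (summable_deriv_bound l r hr0 hr1)
    (Metric.isOpen_ball) ((convex_ball (0:ℂ) r).isPreconnected)
    (g' := fun (j : ℕ) (w : ℂ) => (j : ℂ) * cC l j * w ^ (j - 1))
    (y₀ := y)
  · intro j w _
    have := (hasDerivAt_pow j w).const_mul (cC l j)
    refine this.congr_deriv ?_
    ring
  · intro j w hw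
    rw [norm_mul, norm_mul, norm_pow, Complex.norm_natCast]
    have hwr : ‖w‖ ≤ r := by
      rw [Metric.mem_ball, dist_zero_right] at hw
      exact hw.le
    apply mul_le_mul_of_nonneg_left _ (by positivity)
    exact pow_le_pow_left₀ (norm_nonneg w) hwr _
  · rw [Metric.mem_ball, dist_zero_right]; exact hyr
  · exact summable_pow l y hy
  · rw [Metric.mem_ball, dist_zero_right]; exact hyr

lemma ode_Fb (l : ℂ) (y : ℂ) (hy : ‖y‖ < 1) :
    (1 + y) * (∑' j : ℕ, (j : ℂ) * cC l j * y ^ (j - 1)) = l * Fb l y := by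
  have S2 := summable_deriv_pt l y hy
  have S4 := summable_deriv_pt' l y hy
  have S3 : Summable (fun j : ℕ => ((j:ℕ) + 1 : ℂ) * cC l (j+1) * y ^ j) := by
    have := (summable_nat_add_iff 1).2 S2
    apply this.congr
    intro j
    push_cast
    simp
  have hD : (∑' j : ℕ, (j : ℂ) * cC l j * y ^ (j - 1))
      = ∑' j : ℕ, ((j:ℕ) + 1 : ℂ) * cC l (j+1) * y ^ j := by
    rw [Summable.tsum_eq_zero_add S2]
    push_cast
    simp
  have hyD : y * (∑' j : ℕ, ((j:ℕ) + 1 : ℂ) * cC l (j+1) * y ^ j)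
      = ∑' j : ℕ, (j : ℂ) * cC l j * y ^ j := by
    rw [← tsum_mul_left, Summable.tsum_eq_zero_add S4]
    push_cast
    simp only [Nat.cast_zero, zero_mul, mul_zero, zero_add, pow_succ]
    apply tsum_congr
    intro j
    ring
  have key : ∀ j : ℕ, ((j:ℕ) + 1 : ℂ) * cC l (j+1) = (l - j) * cC l j := by
    intro j
    rw [cC_succ]
    have : ((j:ℂ) + 1) ≠ 0 := by
      have : (0:ℝ) < (j:ℝ) + 1 := by positivity
      simpa using fun h => by
        have := congrArg Complex.re h
        simp at this
        linarith
    push_cast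
    field_simp
  rw [hD, add_mul, one_mul, hyD, Fb, ← tsum_mul_left, ← Summable.tsum_add S3 S4]
  apply tsum_congr
  intro j
  rw [key j]
  ring

lemma hasSum_cbinom (l : ℂ) (z : ℂ) (hz : ‖z‖ < 1) :
    HasSum (fun j : ℕ => cC l j * z ^ j) ((1 + z) ^ l) := by
  have h1z : (1 : ℂ) + z ≠ 0 := by
    intro h
    have : z = -1 := by linear_combination h
    rw [this] at hz
    simp at hz
  set r : ℝ := (1 + ‖z‖) / 2 with hr
  have hzr : ‖z‖ < r := by rw [hr]; linarith
  have hr0 : 0 < r := by positivity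
  have hr1 : r < 1 := by rw [hr]; linarith
  set G : ℂ → ℂ := fun w => Complex.exp (-l * Complex.log (1 + w)) * Fb l w with hG
  have hball : ∀ w : ℂ, w ∈ Metric.ball (0:ℂ) r → ‖w‖ < 1 := by
    intro w hw
    rw [Metric.mem_ball, dist_zero_right] at hw
    linarith
  have hGd : ∀ w ∈ Metric.ball (0:ℂ) r, HasDerivAt G 0 w := by
    intro w hw
    have hw1 : ‖w‖ < 1 := hball w hw
    have h1w : (1 : ℂ) + w ≠ 0 := by
      intro h
      have : w = -1 := by linear_combination h
      rw [this] at hw1; simp at hw1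
    have hslit : (1 : ℂ) + w ∈ Complex.slitPlane := by
      rw [Complex.mem_slitPlane_iff]
      left
      have := Complex.abs_re_le_norm w
      simp only [Complex.add_re, Complex.one_re]
      have : |w.re| ≤ ‖w‖ := Complex.abs_re_le_norm w
      have h2 : -‖w‖ ≤ w.re := by cases abs_le.1 this; linarith
      linarith
    have hlog : HasDerivAt (fun w : ℂ => Complex.log (1 + w)) ((1 + w)⁻¹) w := by
      have hinner : HasDerivAt (fun w : ℂ => 1 + w) 1 w := by
        simpa using (hasDerivAt_id w).const_add (1:ℂ)
      have := (Complex.hasDerivAt_log hslit).comp w hinner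
      simp at this
      exact this
    have hE : HasDerivAt (fun w : ℂ => Complex.exp (-l * Complex.log (1 + w)))
        (Complex.exp (-l * Complex.log (1 + w)) * (-l * (1 + w)⁻¹)) w := by
      have := ((hlog.const_mul (-l)).cexp)
      simpa [mul_comm] using this
    have hF := hasDerivAt_Fb l w hw1
    have hode := ode_Fb l w hw1
    have := hE.mul hF
    refine this.congr_deriv ?_
    set D := ∑' j : ℕ, (j : ℂ) * cC l j * w ^ (j - 1) with hD
    have hDval : D = (1 + w)⁻¹ * (l * Fb l w) := by
      rw [eq_inv_mul_iff_mul_eq₀ h1w]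
      exact hode
    rw [hDval]
    field_simp
    ring
  have hconst : G z = G 0 := by
    apply (convex_ball (0:ℂ) r).is_const_of_fderivWithin_eq_zero
      (fun w hw => ((hGd w hw).differentiableAt).differentiableWithinAt)
    · intro w hw
      rw [fderivWithin_of_isOpen Metric.isOpen_ball hw]
      have := (hGd w hw).hasFDerivAt.fderiv
      rw [this]
      ext x
      simp
    · rw [Metric.mem_ball, dist_zero_right]; exact hzr
    · rw [Metric.mem_ball, dist_zero_right]; simpa using hr0
  have hF0 : Fb l 0 = 1 := by
    rw [Fb, tsum_eq_single 0]
    · simp [cC_zero]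
    · intro b hb
      simp [zero_pow hb]
  have hG0 : G 0 = 1 := by
    rw [hG]
    simp [hF0]
  have hFz : Fb l z = Complex.exp (l * Complex.log (1 + z)) := by
    have h : Complex.exp (-l * Complex.log (1 + z)) * Fb l z = 1 := hconst.trans hG0
    have h2 : Complex.exp (l * Complex.log (1 + z)) *
        (Complex.exp (-l * Complex.log (1 + z)) * Fb l z)
        = Complex.exp (l * Complex.log (1 + z)) * 1 := by rw [h]
    rw [← mul_assoc, ← Complex.exp_add, mul_one] at h2
    simpa using h2
  have : (1 + z) ^ l = Fb l z := by
    rw [Complex.cpow_def_of_ne_zero h1z, hFz, mul_comm]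
  rw [this]
  exact (summable_pow l z hz).hasSum




open scoped Quaternion

/-- Embedding of the real quaternions into the complexified quaternions. -/
noncomputable def qc (q : ℍ[ℝ]) : Quaternion ℂ :=
  ⟨(q.re : ℂ), (q.imI : ℂ), (q.imJ : ℂ), (q.imK : ℂ)⟩


noncomputable instance : TopologicalSpace (Quaternion ℂ) :=
  TopologicalSpace.induced (QuaternionAlgebra.equivTuple (-1 : ℂ) 0 (-1)) inferInstance

/-- The quaternionic binomial coefficient `C(q,j) = q(q-1)⋯(q-j+1)/j!`. -/
noncomputable def qbinom (q : ℍ[ℝ]) (j : ℕ) : ℍ[ℝ] :=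
  ((j.factorial : ℝ))⁻¹ • ((List.range j).map (fun k => q - (k : ℍ[ℝ]))).prod

@[simp] lemma qc_re (x : ℍ[ℝ]) : (qc x).re = (x.re : ℂ) := rfl
@[simp] lemma qc_imI (x : ℍ[ℝ]) : (qc x).imI = (x.imI : ℂ) := rfl
@[simp] lemma qc_imJ (x : ℍ[ℝ]) : (qc x).imJ = (x.imJ : ℂ) := rfl
@[simp] lemma qc_imK (x : ℍ[ℝ]) : (qc x).imK = (x.imK : ℂ) := rfl

lemma qc_mul (x y : ℍ[ℝ]) : qc (x * y) = qc x * qc y := by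
  ext <;>
    simp [Quaternion.re_mul, Quaternion.imI_mul, Quaternion.imJ_mul, Quaternion.imK_mul] <;>
    push_cast <;> ring

lemma qc_smul (r : ℝ) (x : ℍ[ℝ]) : qc (r • x) = (r : ℂ) • qc x := by
  ext <;>
    simp [Quaternion.re_smul, Quaternion.imI_smul, Quaternion.imJ_smul, Quaternion.imK_smul,
      smul_eq_mul] <;> push_cast <;> ring

lemma qc_one : qc 1 = 1 := by ext <;> simp

-- toolkit: scalar lemmas for ℍ[ℂ] proved componentwise
lemma Qsmul_add (a : ℂ) (x y : ℍ[ℂ]) : a • (x + y) = a • x + a • y := by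
  ext <;> simp [Quaternion.re_smul, Quaternion.imI_smul, Quaternion.imJ_smul,
    Quaternion.imK_smul, smul_eq_mul] <;> ring

lemma Qsmul_smul (a b : ℂ) (x : ℍ[ℂ]) : a • b • x = (a * b) • x := by
  ext <;> simp [Quaternion.re_smul, Quaternion.imI_smul, Quaternion.imJ_smul,
    Quaternion.imK_smul, smul_eq_mul] <;> ring

lemma Qone_smul (x : ℍ[ℂ]) : (1 : ℂ) • x = x := by
  ext <;> simp [Quaternion.re_smul, Quaternion.imI_smul, Quaternion.imJ_smul,
    Quaternion.imK_smul, smul_eq_mul]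

lemma Qcoe_smul_one (c : ℂ) : (c : ℍ[ℂ]) = c • (1 : ℍ[ℂ]) := by
  ext <;> simp [Quaternion.re_smul, Quaternion.imI_smul, Quaternion.imJ_smul,
    Quaternion.imK_smul, smul_eq_mul]

noncomputable def Tq : Quaternion ℂ → (Fin 4 → ℂ) :=
  fun x => (QuaternionAlgebra.equivTuple (-1 : ℂ) 0 (-1)) x

open Topology in
lemma hasSum_quaternion {f : ℕ → Quaternion ℂ} {x : Quaternion ℂ}
    (h1 : HasSum (fun j => (f j).re) x.re) (h2 : HasSum (fun j => (f j).imI) x.imI)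
    (h3 : HasSum (fun j => (f j).imJ) x.imJ) (h4 : HasSum (fun j => (f j).imK) x.imK) :
    HasSum f x := by
  have hind : IsInducing Tq := ⟨rfl⟩
  rw [HasSum, hind.tendsto_nhds_iff]
  have H : HasSum (fun j => Tq (f j)) (Tq x) := by
    apply Pi.hasSum.2
    intro i
    fin_cases i
    · exact h1
    · exact h2
    · exact h3
    · exact h4
  have key : (Tq ∘ fun s : Finset ℕ => ∑ j ∈ s, f j)
      = fun s : Finset ℕ => ∑ j ∈ s, Tq (f j) := by
    funext s
    exact map_sum (QuaternionAlgebra.linearEquivTuple (-1 : ℂ) 0 (-1)) f s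
  rw [key]
  exact H

lemma hasSum_pair {x y : ℕ → ℂ} {X Y : ℂ} (hx : HasSum x X) (hy : HasSum y Y)
    (c d : Quaternion ℂ) :
    HasSum (fun j => x j • c + y j • d) (X • c + Y • d) := by
  apply hasSum_quaternion <;>
  · simp only [Quaternion.re_add, Quaternion.imI_add, Quaternion.imJ_add, Quaternion.imK_add,
      Quaternion.re_smul, Quaternion.imI_smul, Quaternion.imJ_smul, Quaternion.imK_smul,
      smul_eq_mul]
    exact (hx.mul_right _).add (hy.mul_right _)


/-- Quaternionic binomial theorem: for `q = a + v` with `a > 0`, `v ≠ 0` and `z ∈ ℂ`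
with `|z| < 1`, `(1+z)^q = ∑_{j=0}^∞ C(q,j) z^j`, where
`(1+z)^q = (1+z)^a (cos(|v| log(1+z)) + (v/|v|) sin(|v| log(1+z)))` in the complexified
quaternions (principal branch of the logarithm). -/
theorem quaternionic_binomial_theorem (q : ℍ[ℝ]) (ha : 0 < q.re) (hv : q.im ≠ 0)
    (z : ℂ) (hz : ‖z‖ < 1) :
    HasSum (fun j : ℕ => z ^ j • qc (qbinom q j))
      (((1 + z) ^ (q.re : ℂ)) •
        (((Complex.cos ((‖q.im‖ : ℂ) * Complex.log (1 + z))) : Quaternion ℂ) +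
          (Complex.sin ((‖q.im‖ : ℂ) * Complex.log (1 + z)) / (‖q.im‖ : ℂ)) • qc q.im)) := by
  have hzn : ‖z‖ < 1 := by exact hz
  have h1z : (1 : ℂ) + z ≠ 0 := by
    intro h
    have : z = -1 := by linear_combination h
    rw [this] at hzn; simp at hzn
  set n : ℝ := ‖q.im‖ with hn
  have hn0 : n ≠ 0 := norm_ne_zero_iff.2 hv
  set ν : ℂ := (n : ℂ) with hν
  have hν0 : ν ≠ 0 := by simpa [hν] using hn0
  set a : ℂ := ((q.re : ℝ) : ℂ) with haa
  set u : Quaternion ℂ := qc q.im with hu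
  set t : ℂ := ν * Complex.I with htdef
  have ht0 : t ≠ 0 := mul_ne_zero hν0 Complex.I_ne_zero
  set lp : ℂ := a - t with hlp
  set lm : ℂ := a + t with hlm
  -- norm identity
  have hnormR : q.imI ^ 2 + q.imJ ^ 2 + q.imK ^ 2 = n ^ 2 := by
    have h1 : Quaternion.normSq q.im = n ^ 2 := by
      rw [hn, sq, Quaternion.normSq_eq_norm_mul_self]
    rw [Quaternion.normSq_def'] at h1
    simpa using h1
  have hnormC : ((q.imI : ℂ)) ^ 2 + (q.imJ : ℂ) ^ 2 + (q.imK : ℂ) ^ 2 = ν ^ 2 := by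
    rw [hν]
    exact_mod_cast hnormR
  -- the key product rule for elements of the form A•1 + B•u
  have Lmul : ∀ A B C D : ℂ, (A • (1:Quaternion ℂ) + B • u) * (C • (1:Quaternion ℂ) + D • u)
      = (A * C + t ^ 2 * (B * D)) • (1:Quaternion ℂ) + (A * D + B * C) • u := by
    intro A B C D
    have htsq : t ^ 2 = -ν ^ 2 := by
      rw [htdef]
      linear_combination ν ^ 2 * Complex.I_sq
    rw [htsq]
    ext <;>
      simp only [hu, Quaternion.re_add, Quaternion.imI_add, Quaternion.imJ_add,
        Quaternion.imK_add, Quaternion.re_smul, Quaternion.imI_smul, Quaternion.imJ_smul,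
        Quaternion.imK_smul, Quaternion.re_mul, Quaternion.imI_mul, Quaternion.imJ_mul,
        Quaternion.imK_mul, Quaternion.re_one, Quaternion.imI_one, Quaternion.imJ_one,
        Quaternion.imK_one, qc_re, qc_imI, qc_imJ, qc_imK, Quaternion.re_im,
        Quaternion.imI_im, Quaternion.imJ_im, Quaternion.imK_im, smul_eq_mul,
        Complex.ofReal_zero, mul_zero, zero_mul, add_zero, zero_add, mul_one] <;>
      try ring
    linear_combination (-(B * D)) * hnormC
  -- decomposition of qc (q - j)
  have hqsub : ∀ j : ℕ, qc (q - (j : ℍ[ℝ])) = (a - (j:ℂ)) • (1:Quaternion ℂ) + (1:ℂ) • u := by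
    intro j
    ext <;>
      simp only [hu, haa, qc_re, qc_imI, qc_imJ, qc_imK, Quaternion.re_sub, Quaternion.imI_sub,
        Quaternion.imJ_sub, Quaternion.imK_sub, Quaternion.re_natCast, Quaternion.imI_natCast,
        Quaternion.imJ_natCast, Quaternion.imK_natCast, Quaternion.re_add, Quaternion.imI_add,
        Quaternion.imJ_add, Quaternion.imK_add, Quaternion.re_smul, Quaternion.imI_smul,
        Quaternion.imJ_smul, Quaternion.imK_smul, Quaternion.re_one, Quaternion.imI_one,
        Quaternion.imJ_one, Quaternion.imK_one, Quaternion.re_im, Quaternion.imI_im,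
        Quaternion.imJ_im, Quaternion.imK_im, smul_eq_mul, mul_one, mul_zero, add_zero,
        Complex.ofReal_zero, Complex.ofReal_sub] <;>
      push_cast <;> ring
  -- qbinom recurrence
  have qbinom_zero : qbinom q 0 = 1 := by
    simp [qbinom]
  have qbinom_succ : ∀ j : ℕ, qbinom q (j+1)
      = ((j:ℝ) + 1)⁻¹ • (qbinom q j * (q - ((j:ℕ) : ℍ[ℝ]))) := by
    intro j
    have hsm : ∀ (r : ℝ) (x y : ℍ[ℝ]), (r • x) * y = r • (x * y) := by
      intro r x y
      ext <;>
        simp only [Quaternion.re_smul, Quaternion.imI_smul, Quaternion.imJ_smul,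
          Quaternion.imK_smul, Quaternion.re_mul, Quaternion.imI_mul, Quaternion.imJ_mul,
          Quaternion.imK_mul, smul_eq_mul] <;> ring
    simp only [qbinom, bind_pure_comp, List.map_eq_map, List.map_map, List.range_succ,
      List.map_append, List.prod_append, List.map_cons, List.map_nil, List.prod_cons,
      List.prod_nil, Nat.factorial_succ, Nat.cast_mul, Nat.cast_add, Nat.cast_one, mul_one,
      Function.comp]
    rw [mul_inv, mul_smul, hsm]
  -- the key decomposition by induction
  have key : ∀ j : ℕ, qc (qbinom q j)
      = ((cC lp j + cC lm j) / 2) • (1:Quaternion ℂ)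
        + ((cC lm j - cC lp j) / (2 * t)) • u := by
    intro j
    induction j with
    | zero =>
      rw [qbinom_zero, qc_one, cC_zero, cC_zero]
      ext <;>
        simp [Quaternion.re_smul, Quaternion.imI_smul, Quaternion.imJ_smul,
          Quaternion.imK_smul, smul_eq_mul]
    | succ j ih =>
      rw [qbinom_succ j, qc_smul, qc_mul, ih, hqsub j, Lmul]
      have hj1 : ((j:ℂ) + 1) ≠ 0 := by
        exact_mod_cast (Nat.cast_ne_zero (R := ℂ)).2 (Nat.succ_ne_zero j)
      have hcast : ((((j:ℝ) + 1)⁻¹ : ℝ) : ℂ) = ((j:ℂ) + 1)⁻¹ := by push_cast; ring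
      rw [hcast, Qsmul_add, Qsmul_smul, Qsmul_smul]
      have e1 : ((j:ℂ) + 1)⁻¹ * ((cC lp j + cC lm j) / 2 * (a - (j:ℂ))
            + t ^ 2 * ((cC lm j - cC lp j) / (2 * t) * 1))
          = (cC lp (j+1) + cC lm (j+1)) / 2 := by
        rw [cC_succ, cC_succ, hlp, hlm]
        field_simp
        ring
      have e2 : ((j:ℂ) + 1)⁻¹ * ((cC lp j + cC lm j) / 2 * 1
            + (cC lm j - cC lp j) / (2 * t) * (a - (j:ℂ)))
          = (cC lm (j+1) - cC lp (j+1)) / (2 * t) := by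
        rw [cC_succ, cC_succ, hlp, hlm]
        field_simp
        ring
      rw [e1, e2]
  -- the two scalar series
  have hp := hasSum_cbinom lp z hzn
  have hm := hasSum_cbinom lm z hzn
  have hEp : (1 + z) ^ lp
      = Complex.exp (Complex.log (1 + z) * a)
        * (Complex.cos (ν * Complex.log (1 + z))
          - Complex.sin (ν * Complex.log (1 + z)) * Complex.I) := by
    rw [Complex.cpow_def_of_ne_zero h1z]
    rw [show Complex.log (1 + z) * lp
        = Complex.log (1 + z) * a + (-(ν * Complex.log (1 + z))) * Complex.I by
      rw [hlp, htdef]; ring]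
    rw [Complex.exp_add, Complex.exp_mul_I, Complex.cos_neg, Complex.sin_neg]
    ring
  have hEm : (1 + z) ^ lm
      = Complex.exp (Complex.log (1 + z) * a)
        * (Complex.cos (ν * Complex.log (1 + z))
          + Complex.sin (ν * Complex.log (1 + z)) * Complex.I) := by
    rw [Complex.cpow_def_of_ne_zero h1z]
    rw [show Complex.log (1 + z) * lm
        = Complex.log (1 + z) * a + (ν * Complex.log (1 + z)) * Complex.I by
      rw [hlm, htdef]; ring]
    rw [Complex.exp_add, Complex.exp_mul_I]
  have hx : HasSum (fun j : ℕ => z ^ j * ((cC lp j + cC lm j) / 2))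
      (Complex.exp (Complex.log (1 + z) * a) * Complex.cos (ν * Complex.log (1 + z))) := by
    have h2 := (hp.add hm).mul_left 2⁻¹
    have hval : 2⁻¹ * ((1 + z) ^ lp + (1 + z) ^ lm)
        = Complex.exp (Complex.log (1 + z) * a) * Complex.cos (ν * Complex.log (1 + z)) := by
      rw [hEp, hEm]; ring
    rw [hval] at h2
    have hfe : (fun j : ℕ => z ^ j * ((cC lp j + cC lm j) / 2))
        = fun j : ℕ => 2⁻¹ * (cC lp j * z ^ j + cC lm j * z ^ j) := by
      funext j; ring
    rw [hfe]; exact h2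
  have hy : HasSum (fun j : ℕ => z ^ j * ((cC lm j - cC lp j) / (2 * t)))
      (Complex.exp (Complex.log (1 + z) * a)
        * (Complex.sin (ν * Complex.log (1 + z)) / ν)) := by
    have h2 := (hm.sub hp).mul_left (2 * t)⁻¹
    have hval : (2 * t)⁻¹ * ((1 + z) ^ lm - (1 + z) ^ lp)
        = Complex.exp (Complex.log (1 + z) * a)
          * (Complex.sin (ν * Complex.log (1 + z)) / ν) := by
      rw [hEp, hEm, htdef]
      field_simp
      ring
    rw [hval] at h2
    have hfe : (fun j : ℕ => z ^ j * ((cC lm j - cC lp j) / (2 * t)))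
        = fun j : ℕ => (2 * t)⁻¹ * (cC lm j * z ^ j - cC lp j * z ^ j) := by
      funext j; ring
    rw [hfe]; exact h2
  have H := hasSum_pair hx hy (1 : Quaternion ℂ) u
  have hfun : (fun j : ℕ => z ^ j • qc (qbinom q j))
      = fun j : ℕ => (z ^ j * ((cC lp j + cC lm j) / 2)) • (1:Quaternion ℂ)
        + (z ^ j * ((cC lm j - cC lp j) / (2 * t))) • u := by
    funext j
    rw [key j, Qsmul_add, Qsmul_smul, Qsmul_smul]
  rw [hfun]
  have hvalfin : ((1 + z) ^ (a)) •
      (((Complex.cos (ν * Complex.log (1 + z))) : Quaternion ℂ) +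
        (Complex.sin (ν * Complex.log (1 + z)) / ν) • u)
      = (Complex.exp (Complex.log (1 + z) * a)
          * Complex.cos (ν * Complex.log (1 + z))) • (1:Quaternion ℂ)
        + (Complex.exp (Complex.log (1 + z) * a)
          * (Complex.sin (ν * Complex.log (1 + z)) / ν)) • u := by
    rw [Complex.cpow_def_of_ne_zero h1z, Qcoe_smul_one, Qsmul_add, Qsmul_smul, Qsmul_smul]
  rw [hvalfin]
  exact H
end

section
/- For every real quaternion q = a + v with a > 0 and v ≠ 0, ∑_{j=0}^∞ C(q,j) = 2^q and ∑_{j=0}^∞ (-1)^j C(q,j) = 0, where C(q,j) = q(q-1)⋯(q-j+1)/j! and 2^q := 2^a(cos(|v| log 2) + (v/|v|) sin(|v| log 2)). -/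
open scoped Quaternion
open Complex Filter Finset Topology

lemma QB.hasDerivAt (c : ℂ) {w : ℂ} (hw : 1 + w ∈ Complex.slitPlane) :
    HasDerivAt (fun w => Complex.exp (c * Complex.log (1 + w)))
      (c * Complex.exp ((c - 1) * Complex.log (1 + w))) w := by
  have h0 : (1 + w) ≠ 0 := Complex.slitPlane_ne_zero hw
  have hlog : HasDerivAt (fun w : ℂ => Complex.log (1 + w)) (1 + w)⁻¹ w := by
    exact ((Complex.hasDerivAt_log hw).comp w ((hasDerivAt_id w).const_add 1)).congr_deriv (by simp)
  have h := (hlog.const_mul c).cexp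
  refine h.congr_deriv ?_
  rw [sub_mul, one_mul, Complex.exp_sub, Complex.exp_log h0]
  field_simp

lemma QB.iterDeriv (z : ℂ) (n : ℕ) :
    ∀ w : ℂ, 1 + w ∈ Complex.slitPlane →
      iteratedDeriv n (fun w => Complex.exp (z * Complex.log (1 + w))) w
        = (∏ k ∈ Finset.range n, (z - k)) * Complex.exp ((z - n) * Complex.log (1 + w)) := by
  induction n with
  | zero => intro w hw; simp
  | succ n ih =>
    intro w hw
    have hopen : IsOpen {w : ℂ | 1 + w ∈ Complex.slitPlane} :=
      Complex.isOpen_slitPlane.preimage (by continuity)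
    have hev : (iteratedDeriv n (fun w => Complex.exp (z * Complex.log (1+w))))
        =ᶠ[nhds w] (fun w => (∏ k ∈ Finset.range n, (z - k)) *
          Complex.exp ((z - n) * Complex.log (1 + w))) :=
      Filter.eventuallyEq_of_mem (hopen.mem_nhds hw) (fun x hx => ih x hx)
    rw [iteratedDeriv_succ, hev.deriv_eq,
      ((QB.hasDerivAt (z - n) hw).const_mul ((∏ k ∈ Finset.range n, (z - k)))).deriv,
      Finset.prod_range_succ]
    have : z - (↑(n+1) : ℂ) = z - n - 1 := by push_cast; ring
    rw [this]
    ring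

lemma QB.binSeries (z : ℂ) {x : ℂ} (hx : ‖x‖ < 1) :
    HasSum (fun n => ((n.factorial : ℂ))⁻¹ * (∏ k ∈ Finset.range n, (z - k)) * x ^ n)
      (Complex.exp (z * Complex.log (1 + x))) := by
  set f : ℂ → ℂ := fun w => Complex.exp (z * Complex.log (1 + w)) with hf
  have hnx : (0:ℝ) ≤ ‖x‖ := norm_nonneg x
  set R : NNReal := ⟨(1 + ‖x‖)/2, by positivity⟩ with hR
  have hxR : ‖x‖ < (R : ℝ) := by simp only [hR, NNReal.coe_mk]; show ‖x‖ < (1 + ‖x‖)/2; linarith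
  have hR1 : (R : ℝ) < 1 := by simp only [hR, NNReal.coe_mk]; show (1 + ‖x‖)/2 < 1; linarith
  have hmem : ∀ w : ℂ, w ∈ Metric.closedBall (0:ℂ) R → 1 + w ∈ Complex.slitPlane := by
    intro w hw
    rw [Metric.mem_closedBall, dist_zero_right] at hw
    apply Complex.mem_slitPlane_iff.mpr
    left
    have h1 : |w.re| ≤ ‖w‖ := Complex.abs_re_le_norm w
    have : (1 + w).re = 1 + w.re := by simp
    rw [this]
    have := abs_le.mp h1
    linarith
  have hdiff : DifferentiableOn ℂ f (Metric.closedBall 0 R) := fun w hwmem =>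
    ((QB.hasDerivAt z (hmem w hwmem)).differentiableAt).differentiableWithinAt
  have hRpos : 0 < R := by
    rw [← NNReal.coe_pos]
    simp only [hR, NNReal.coe_mk]; show (0:ℝ) < (1 + ‖x‖)/2; positivity
  have hps := hdiff.hasFPowerSeriesOnBall hRpos
  have hxmem : x ∈ Metric.eball (0:ℂ) R := by
    rw [Metric.mem_eball, edist_zero_right]
    exact_mod_cast hxR
  have hsum := hps.hasSum_iteratedFDeriv hxmem
  simp only [zero_add] at hsum
  have h10 : (1:ℂ) + 0 ∈ Complex.slitPlane := by
    rw [add_zero]; exact Complex.one_mem_slitPlane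
  have hiter : ∀ n : ℕ, iteratedDeriv n f 0 = ∏ k ∈ Finset.range n, (z - k) := by
    intro n
    rw [QB.iterDeriv z n 0 h10]
    simp
  convert hsum using 2 with n
  · rfl
  have hFD : iteratedFDeriv ℂ n f 0 (fun _ => x) = x ^ n • iteratedDeriv n f 0 := by
    have h := (iteratedFDeriv ℂ n f 0).map_smul_univ (fun _ : Fin n => x) (fun _ => 1)
    simp only [smul_eq_mul, mul_one, Finset.prod_const, Finset.card_univ,
      Fintype.card_fin] at h
    rw [h, iteratedDeriv_eq_iteratedFDeriv, smul_eq_mul]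
  rw [hFD, hiter n, smul_eq_mul, smul_eq_mul]
  ring

lemma QB.cb_succ (z : ℂ) (n : ℕ) :
    (((n+1).factorial : ℂ))⁻¹ * ∏ k ∈ Finset.range (n+1), (z - k)
      = (((n.factorial : ℂ))⁻¹ * ∏ k ∈ Finset.range n, (z - k)) * ((z - n)/((n:ℂ)+1)) := by
  rw [Finset.prod_range_succ, Nat.factorial_succ]
  have h1 : ((n:ℂ)+1) ≠ 0 := by
    exact_mod_cast Nat.cast_add_one_ne_zero (R := ℂ) n
  have h2 : (n.factorial : ℂ) ≠ 0 := Nat.cast_ne_zero.mpr n.factorial_ne_zero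
  push_cast
  rw [mul_inv, div_eq_mul_inv]
  ring

lemma QB.ratio {s t : ℝ} (hs : 0 < s) (ht : 0 < t) :
    t ^ (-s : ℝ) * ((t - s)/t) ≤ (t+1) ^ (-s : ℝ) := by
  rw [Real.rpow_def_of_pos ht, Real.rpow_def_of_pos (by linarith : (0:ℝ) < t+1)]
  have hlog : Real.log (t+1) - Real.log t = Real.log (1 + 1/t) := by
    rw [← Real.log_div (by linarith) (ne_of_gt ht)]
    congr 1
    field_simp
  have h1 : (t-s)/t = 1 - s/t := by field_simp
  have h2 : 1 - s/t ≤ Real.exp (-(s/t)) := by linarith [Real.add_one_le_exp (-(s/t))]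
  have h3 : Real.log (1+1/t) ≤ 1/t := by
    have := Real.log_le_sub_one_of_pos (show (0:ℝ) < 1 + 1/t by positivity)
    linarith
  have h4 : Real.exp (-(s/t)) ≤ Real.exp (-(s * Real.log (1+1/t))) := by
    apply Real.exp_le_exp.mpr
    have h5 := mul_le_mul_of_nonneg_left h3 hs.le
    have h6 : s * (1/t) = s/t := by ring
    linarith
  calc Real.exp (Real.log t * -s) * ((t-s)/t)
      ≤ Real.exp (Real.log t * -s) * Real.exp (-(s * Real.log (1+1/t))) := by
        apply mul_le_mul_of_nonneg_left _ (Real.exp_pos _).le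
        rw [h1]; exact h2.trans h4
    _ = Real.exp (Real.log t * -s + -(s * (Real.log (t+1) - Real.log t))) := by
        rw [← Real.exp_add, hlog]
    _ = Real.exp (Real.log (t+1) * -s) := by ring_nf

lemma QB.summable_norm (z : ℂ) (ha : 0 < z.re) :
    Summable (fun n : ℕ => ‖((n.factorial : ℂ))⁻¹ * ∏ k ∈ Finset.range n, (z - k)‖) := by
  set a : ℝ := z.re with haa
  set b : ℝ := z.im with hbb
  set s : ℝ := 1 + min a 1 / 2 with hss
  set u : ℕ → ℝ := fun n => ‖((n.factorial : ℂ))⁻¹ * ∏ k ∈ Finset.range n, (z - k)‖ with hu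
  have hm : 0 < min a 1 := lt_min ha one_pos
  have hs1 : 1 < s := by simp only [hss]; linarith
  have hd : 0 < 1 + a - s := by
    have := min_le_left a 1
    simp only [hss]; linarith
  -- eventual bound on ‖z - n‖
  have hkey : ∀ᶠ n : ℕ in atTop, ‖z - (n:ℂ)‖ ≤ (n:ℝ) + 1 - s := by
    have htend : Tendsto (fun n : ℕ => (1 + a - s) * (2*(n:ℝ) + (1 - s - a))) atTop atTop := by
      apply Filter.Tendsto.const_mul_atTop hd
      apply tendsto_atTop_add_const_right
      exact (tendsto_natCast_atTop_atTop (R := ℝ)).const_mul_atTop two_pos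
    have hev1 := htend.eventually_ge_atTop (b^2)
    have hev2 : ∀ᶠ n : ℕ in atTop, s ≤ (n:ℝ) + 1 := by
      have : Tendsto (fun n : ℕ => (n:ℝ) + 1) atTop atTop :=
        tendsto_atTop_add_const_right _ _ (tendsto_natCast_atTop_atTop (R := ℝ))
      exact this.eventually_ge_atTop s
    filter_upwards [hev1, hev2] with n h1 h2
    have hns : (0:ℝ) ≤ (n:ℝ) + 1 - s := by linarith
    have hnorm2 : ‖z - (n:ℂ)‖^2 = (a - n)^2 + b^2 := by
      rw [Complex.sq_norm, Complex.normSq_apply]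
      simp only [Complex.sub_re, Complex.natCast_re, Complex.sub_im, Complex.natCast_im,
        ← haa, ← hbb]
      ring
    have h3 : ‖z - (n:ℂ)‖^2 ≤ ((n:ℝ)+1-s)^2 := by nlinarith
    calc ‖z - (n:ℂ)‖ = Real.sqrt (‖z - (n:ℂ)‖^2) := (Real.sqrt_sq (norm_nonneg _)).symm
      _ ≤ Real.sqrt (((n:ℝ)+1-s)^2) := Real.sqrt_le_sqrt h3
      _ = (n:ℝ)+1-s := Real.sqrt_sq hns
  obtain ⟨N, hN⟩ := eventually_atTop.mp hkey
  set C : ℝ := u N * ((N:ℝ)+1) ^ (s:ℝ) with hC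
  have hCnn : 0 ≤ C := by
    apply mul_nonneg (norm_nonneg _)
    positivity
  have hbound : ∀ n, N ≤ n → u n ≤ C * ((n:ℝ)+1) ^ (-s : ℝ) := by
    intro n hn
    induction n, hn using Nat.le_induction with
    | base =>
      rw [hC, mul_assoc, ← Real.rpow_add (by positivity), add_neg_cancel, Real.rpow_zero, mul_one]
    | succ n hn ih =>
      have ht : (0:ℝ) < (n:ℝ) + 1 := by positivity
      have hzn := hN n hn
      have hnormn : ‖((n:ℂ)+1)‖ = (n:ℝ)+1 := by
        rw [show ((n:ℂ)+1) = ((n+1 : ℕ):ℂ) by push_cast; ring, Complex.norm_natCast]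
        push_cast; ring
      have hustep : u (n+1) = u n * (‖z - (n:ℂ)‖ / ((n:ℝ)+1)) := by
        simp only [hu]
        rw [QB.cb_succ, norm_mul, norm_div, hnormn]
      rw [hustep]
      have step1 : u n * (‖z - (n:ℂ)‖ / ((n:ℝ)+1))
          ≤ (C * ((n:ℝ)+1) ^ (-s : ℝ)) * ((((n:ℝ)+1) - s)/((n:ℝ)+1)) := by
        apply mul_le_mul ih
        · gcongr
        · positivity
        · positivity
      refine step1.trans ?_
      rw [mul_assoc]
      have := QB.ratio (show (0:ℝ) < s by linarith) ht
      calc C * (((n:ℝ)+1) ^ (-s:ℝ) * ((((n:ℝ)+1) - s)/((n:ℝ)+1)))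
          ≤ C * (((n:ℝ)+1+1) ^ (-s:ℝ)) := by
            apply mul_le_mul_of_nonneg_left this hCnn
        _ = C * ((((n+1:ℕ)):ℝ)+1) ^ (-s:ℝ) := by push_cast; ring_nf
  -- summability of the majorant
  have hg : Summable (fun n : ℕ => C * ((n:ℝ)+1) ^ (-s : ℝ)) := by
    apply Summable.mul_left
    have h0 : Summable (fun n : ℕ => (((n:ℝ)) ^ (s:ℝ))⁻¹) := Real.summable_nat_rpow_inv.mpr hs1
    have h1 := (summable_nat_add_iff 1).mpr h0
    apply h1.congr
    intro n
    rw [← Real.rpow_neg (by positivity)]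
    push_cast
    ring_nf
  apply Summable.of_norm_bounded_eventually hg
  rw [Nat.cofinite_eq_atTop]
  filter_upwards [eventually_atTop.mpr ⟨N, hbound⟩] with n h
  rwa [Real.norm_of_nonneg (norm_nonneg _)]

lemma QB.hasSum_one (z : ℂ) (ha : 0 < z.re) :
    HasSum (fun n : ℕ => ((n.factorial : ℂ))⁻¹ * ∏ k ∈ Finset.range n, (z - k))
      (Complex.exp (z * Complex.log 2)) := by
  set c : ℕ → ℂ := fun n => ((n.factorial : ℂ))⁻¹ * ∏ k ∈ Finset.range n, (z - k) with hc
  have hsm : Summable c := (QB.summable_norm z ha).of_norm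
  have habel := Complex.tendsto_tsum_powerSeries_nhdsWithin_lt (f := c)
    hsm.hasSum.tendsto_sum_nat
  rw [tendsto_map'_iff] at habel
  have hIoo : Set.Ioo (0:ℝ) 1 ∈ 𝓝[<] (1:ℝ) :=
    Ioo_mem_nhdsLT_of_mem (by constructor <;> norm_num)
  have heq : ((fun w : ℂ => ∑' n, c n * w ^ n) ∘ Complex.ofReal) =ᶠ[𝓝[<] (1:ℝ)]
      (fun x : ℝ => Complex.exp (z * Complex.log (1 + x))) := by
    filter_upwards [hIoo] with x hx
    have hxn : ‖(x:ℂ)‖ < 1 := by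
      rw [Complex.norm_real, Real.norm_eq_abs, abs_lt]
      exact ⟨by linarith [hx.1], hx.2⟩
    exact (QB.binSeries z hxn).tsum_eq
  have hcont : Tendsto (fun x : ℝ => Complex.exp (z * Complex.log (1 + x))) (𝓝[<] (1:ℝ))
      (𝓝 (Complex.exp (z * Complex.log 2))) := by
    have h1 : ContinuousAt (fun x : ℝ => (1:ℂ) + (x:ℂ)) 1 := by fun_prop
    have h2 : (fun x : ℝ => (1:ℂ) + (x:ℂ)) 1 ∈ Complex.slitPlane := by
      simp only []
      rw [show (1:ℂ) + ((1:ℝ):ℂ) = 2 by norm_num]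
      exact Complex.mem_slitPlane_iff.mpr (Or.inl (by norm_num))
    have hC : ContinuousAt (fun x : ℝ => Complex.exp (z * Complex.log (1 + x))) 1 :=
      Complex.continuous_exp.continuousAt.comp (continuousAt_const.mul (h1.clog h2))
    have ht := (hC.continuousWithinAt (s := Set.Iio 1)).tendsto
    have hval2 : Complex.exp (z * Complex.log (1 + ((1:ℝ):ℂ))) = Complex.exp (z * Complex.log 2) := by
      norm_num
    rwa [hval2] at ht
  have hval : ∑' n, c n = Complex.exp (z * Complex.log 2) :=
    tendsto_nhds_unique (habel.congr' heq) hcont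
  exact hval ▸ hsm.hasSum

lemma QB.hasSum_neg_one (z : ℂ) (ha : 0 < z.re) :
    HasSum (fun n : ℕ => (-1:ℂ)^n * (((n.factorial : ℂ))⁻¹ * ∏ k ∈ Finset.range n, (z - k)))
      0 := by
  set c : ℕ → ℂ := fun n =>
    (-1:ℂ)^n * (((n.factorial : ℂ))⁻¹ * ∏ k ∈ Finset.range n, (z - k)) with hc
  have hsm : Summable c := by
    apply Summable.of_norm
    apply (QB.summable_norm z ha).congr
    intro n
    simp [hc, norm_mul]
  have habel := Complex.tendsto_tsum_powerSeries_nhdsWithin_lt (f := c)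
    hsm.hasSum.tendsto_sum_nat
  rw [tendsto_map'_iff] at habel
  have hIoo : Set.Ioo (0:ℝ) 1 ∈ 𝓝[<] (1:ℝ) :=
    Ioo_mem_nhdsLT_of_mem (by constructor <;> norm_num)
  have heq : ((fun w : ℂ => ∑' n, c n * w ^ n) ∘ Complex.ofReal) =ᶠ[𝓝[<] (1:ℝ)]
      (fun x : ℝ => Complex.exp (z * Complex.log (1 - (x:ℂ)))) := by
    filter_upwards [hIoo] with x hx
    have hxn : ‖-(x:ℂ)‖ < 1 := by
      rw [norm_neg, Complex.norm_real, Real.norm_eq_abs, abs_lt]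
      exact ⟨by linarith [hx.1], hx.2⟩
    have hs := QB.binSeries z hxn
    rw [show (1:ℂ) + -(x:ℂ) = 1 - (x:ℂ) by ring] at hs
    have hfe : (fun n : ℕ => c n * (x:ℂ) ^ n)
        = fun n => (((n.factorial : ℂ))⁻¹ * ∏ k ∈ Finset.range n, (z - k)) * (-(x:ℂ)) ^ n := by
      funext n
      have hnp : (-(x:ℂ))^n = (-1:ℂ)^n * (x:ℂ)^n := by
        rw [neg_eq_neg_one_mul, mul_pow]
      simp only [hc, hnp]
      ring
    exact (hfe ▸ hs).tsum_eq
  have hzero : Tendsto (fun x : ℝ => Complex.exp (z * Complex.log (1 - (x:ℂ)))) (𝓝[<] (1:ℝ))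
      (𝓝 0) := by
    rw [tendsto_zero_iff_norm_tendsto_zero]
    have hnorm : ∀ᶠ x : ℝ in 𝓝[<] (1:ℝ),
        Real.exp (z.re * Real.log (1 - x)) = ‖Complex.exp (z * Complex.log (1 - (x:ℂ)))‖ := by
      filter_upwards [hIoo] with x hx
      have h1x : (0:ℝ) < 1 - x := by linarith [hx.2]
      have hcast : (1 - (x:ℂ)) = ((1 - x : ℝ) : ℂ) := by push_cast; ring
      rw [hcast, ← Complex.ofReal_log h1x.le, Complex.norm_exp]
      congr 1
      simp [Complex.mul_re]
    have l1 : Tendsto (fun x : ℝ => 1 - x) (𝓝[<] (1:ℝ)) (𝓝[>] (0:ℝ)) := by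
      rw [tendsto_nhdsWithin_iff]
      constructor
      · have hco : Tendsto (fun x : ℝ => 1 - x) (𝓝 (1:ℝ)) (𝓝 0) := by
          have h := ((continuous_const (y := (1:ℝ))).sub continuous_id).tendsto (1:ℝ)
          simpa [Pi.sub_def] using h
        exact hco.mono_left nhdsWithin_le_nhds
      · filter_upwards [self_mem_nhdsWithin] with x hx
        simp only [Set.mem_Iio] at hx
        simp only [Set.mem_Ioi]
        linarith
    have l2 := Real.tendsto_log_nhdsGT_zero
    have l3 : Tendsto (fun x : ℝ => z.re * Real.log (1 - x)) (𝓝[<] (1:ℝ)) atBot :=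
      Tendsto.const_mul_atBot ha (l2.comp l1)
    exact (Real.tendsto_exp_atBot.comp l3).congr' hnorm
  have hval : ∑' n, c n = 0 := tendsto_nhds_unique (habel.congr' heq) hzero
  exact hval ▸ hsm.hasSum

lemma QB.list_prod_eq {M : Type*} [CommMonoid M] (f : ℕ → M) (n : ℕ) :
    ((List.range n).map f).prod = ∏ k ∈ Finset.range n, f k := by
  induction n with
  | zero => simp
  | succ n ih => rw [List.range_succ, List.map_append, List.prod_append,
      Finset.prod_range_succ, ih]; simp

/-- `∑_j C(q,j) = 2^q` and `∑_j (-1)^j C(q,j) = 0` for a real quaternion `q = a + v`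
with `a > 0`, `v ≠ 0`. -/
theorem qbinom_sums (q : ℍ[ℝ]) (ha : 0 < q.re) (hv : q.im ≠ 0) :
    HasSum (fun j : ℕ => qbinom q j) (qpow 2 q) ∧
      HasSum (fun j : ℕ => ((-1 : ℝ) ^ j) • qbinom q j) 0 := by
  set b : ℝ := ‖q.im‖ with hb
  have hbpos : 0 < b := norm_pos_iff.mpr hv
  set u : ℍ[ℝ] := b⁻¹ • q.im with hudef
  have hu : u * u = -1 := by
    rw [hudef, smul_mul_smul_comm]
    have h2 : q.im * q.im = ((-(b * b) : ℝ) : ℍ[ℝ]) := by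
      rw [← sq, Quaternion.im_sq, hb, ← Quaternion.normSq_eq_norm_mul_self]
      push_cast
      ring
    rw [h2, Quaternion.smul_coe]
    have h3 : b⁻¹ * b⁻¹ * -(b * b) = -1 := by field_simp
    rw [h3, Quaternion.coe_neg, Quaternion.coe_one]
  set φ : ℂ →ₐ[ℝ] ℍ[ℝ] := Complex.liftAux u hu with hφdef
  have hcont : Continuous φ := φ.toLinearMap.continuous_of_finiteDimensional
  set z : ℂ := ⟨q.re, b⟩ with hz
  have hzre : z.re = q.re := rfl
  have hzim : z.im = b := rfl
  have hφz : φ z = q := by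
    rw [hφdef, Complex.liftAux_apply, hzre, hzim, hudef, smul_smul,
      mul_inv_cancel₀ (ne_of_gt hbpos), one_smul]
    rw [show (algebraMap ℝ ℍ[ℝ]) q.re = (q.re : ℍ[ℝ]) from rfl]
    exact q.re_add_im
  have hφbinom : ∀ j : ℕ,
      φ (((j.factorial : ℂ))⁻¹ * ∏ k ∈ Finset.range j, (z - k)) = qbinom q j := by
    intro j
    have h1 : ((j.factorial : ℂ))⁻¹ * ∏ k ∈ Finset.range j, (z - k)
        = (j.factorial : ℝ)⁻¹ • ((List.range j).map (fun k : ℕ => z - (k:ℂ))).prod := by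
      rw [QB.list_prod_eq (fun k : ℕ => z - (k:ℂ)) j, Complex.real_smul]
      push_cast
      ring
    have h2 : ((List.range j).map (fun k : ℕ => z - (k:ℂ))).map ⇑φ
        = (List.range j).map (fun k => q - (k : ℍ[ℝ])) := by
      clear h1
      induction j with
      | zero => simp
      | succ j ih => rw [List.range_succ]; simp [hφz, ih]
    simp only [qbinom]
    rw [h1, map_smul, map_list_prod, h2]
  have hφpow : φ (Complex.exp (z * Complex.log 2)) = qpow 2 q := by
    have hlog2 : Complex.log 2 = ((Real.log 2 : ℝ) : ℂ) := by
      rw [show (2:ℂ) = ((2:ℝ):ℂ) by norm_num, Complex.ofReal_log (by norm_num : (0:ℝ) ≤ 2)]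
    set lg : ℝ := Real.log 2 with hlg
    have hexp : Complex.exp (z * Complex.log 2)
        = (Real.exp (q.re * lg) : ℝ) •
          (((Real.cos (b * lg) : ℝ) : ℂ) + (Real.sin (b * lg) : ℝ) • Complex.I) := by
      have hsplit : z * Complex.log 2
          = ((q.re * lg : ℝ) : ℂ) + ((b * lg : ℝ) : ℂ) * Complex.I := by
        rw [hlog2, ← Complex.re_add_im z, hzre, hzim]
        push_cast
        ring
      rw [hsplit, Complex.exp_add, Complex.exp_mul_I,
        ← Complex.ofReal_exp, ← Complex.ofReal_cos, ← Complex.ofReal_sin,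
        Complex.real_smul, Complex.real_smul]
    have h2pow : Real.exp (q.re * lg) = (2:ℝ) ^ q.re := by
      rw [hlg, Real.rpow_def_of_pos (by norm_num : (0:ℝ) < 2)]
      ring_nf
    rw [hexp, map_smul, map_add, map_smul, h2pow]
    simp only [qpow, ← hb, ← hlg]
    congr 1
    rw [show ((Real.cos (b * lg) : ℝ) : ℂ) = algebraMap ℝ ℂ (Real.cos (b * lg)) from rfl,
      φ.commutes]
    rw [show (algebraMap ℝ ℍ[ℝ]) (Real.cos (b * lg)) = ((Real.cos (b * lg) : ℝ) : ℍ[ℝ]) from rfl]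
    congr 1
    rw [hφdef, Complex.liftAux_apply_I, hudef, smul_smul, div_eq_mul_inv]
  -- transfer the two sums
  have H1 := (QB.hasSum_one z (by rw [hzre]; exact ha)).map φ hcont
  rw [hφpow] at H1
  have hfe1 : (⇑φ ∘ fun n : ℕ => ((n.factorial : ℂ))⁻¹ * ∏ k ∈ Finset.range n, (z - k))
      = fun j => qbinom q j := by
    funext j
    exact hφbinom j
  rw [hfe1] at H1
  have H1' : HasSum (fun j : ℕ => qbinom q j) (qpow 2 q) := H1
  have H2 := (QB.hasSum_neg_one z (by rw [hzre]; exact ha)).map φ hcont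
  rw [map_zero] at H2
  have hfe2 : (⇑φ ∘ fun n : ℕ =>
        (-1:ℂ)^n * (((n.factorial : ℂ))⁻¹ * ∏ k ∈ Finset.range n, (z - k)))
      = fun j => ((-1 : ℝ) ^ j) • qbinom q j := by
    funext j
    simp only [Function.comp_apply, map_mul, map_pow, map_neg, map_one, hφbinom j]
    rw [Algebra.smul_def, map_pow, map_neg, map_one]
  rw [hfe2] at H2
  have H2' : HasSum (fun j : ℕ => ((-1 : ℝ) ^ j) • qbinom q j) 0 := H2
  exact ⟨H1', H2'⟩
end
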